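/- arXiv:2405.02597 — 5 statements merged into one kernel-verified Lean document; each statement's English description precedes it below -/
import Mathlib

section
/- Let p and q be coprime integers with p > q ≥ 1 and p + q odd. Then there exist n ≥ 1 and integers α_1, …, α_n such that every α_i is even, |α_i| ≥ 2 for all i, α_1 ≥ 2, the denominator q_n of the negative continued fraction [α_1, …, α_n] is nonzero, and p/q = p_n/q_n (i.e. p/q = [α_1, …, α_n]). Moreover, if q > 1 then n ≥ 2. -/
/-- Convergent numerators of the negative continued fraction `[α 1, …, α n]`:
`p 0 = 1`, `p 1 = α 1`, `p i = α i * p (i-1) - p (i-2)`. -/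
def ncfP (α : ℕ → ℤ) : ℕ → ℤ
  | 0 => 1
  | 1 => α 1
  | (i+2) => α (i+2) * ncfP α (i+1) - ncfP α i

/-- Convergent denominators of the negative continued fraction `[α 1, …, α n]`:
`q 0 = 0`, `q 1 = 1`, `q i = α i * q (i-1) - q (i-2)`. -/
def ncfQ (α : ℕ → ℤ) : ℕ → ℤ
  | 0 => 0
  | 1 => 1
  | (i+2) => α (i+2) * ncfQ α (i+1) - ncfQ α i

lemma ncf_neg (α : ℕ → ℤ) : ∀ n, ncfP (fun i => -α i) n = (-1)^n * ncfP α n ∧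
    ncfQ (fun i => -α i) n = (-1)^(n+1) * ncfQ α n
  | 0 => by simp [ncfP, ncfQ]
  | 1 => by simp [ncfP, ncfQ]
  | (n+2) => by
    obtain ⟨h1, h2⟩ := ncf_neg α n
    obtain ⟨h3, h4⟩ := ncf_neg α (n+1)
    constructor
    · show (fun i => -α i) (n+2) * ncfP (fun i => -α i) (n+1) - ncfP (fun i => -α i) n
        = (-1)^(n+2) * (α (n+2) * ncfP α (n+1) - ncfP α n)
      simp only []
      rw [h1, h3]
      ring
    · show (fun i => -α i) (n+2) * ncfQ (fun i => -α i) (n+1) - ncfQ (fun i => -α i) n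
        = (-1)^(n+2+1) * (α (n+2) * ncfQ α (n+1) - ncfQ α n)
      simp only []
      rw [h2, h4]
      ring

def consNCF (c : ℤ) (β : ℕ → ℤ) : ℕ → ℤ := fun i => if i = 1 then c else β (i - 1)

lemma ncf_cons (c : ℤ) (β : ℕ → ℤ) :
    ∀ m, ncfP (consNCF c β) (m+1) = c * ncfP β m - ncfQ β m ∧
      ncfQ (consNCF c β) (m+1) = ncfP β m
  | 0 => by simp [ncfP, ncfQ, consNCF]
  | 1 => by
    constructor
    · show consNCF c β 2 * ncfP (consNCF c β) 1 - ncfP (consNCF c β) 0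
        = c * ncfP β 1 - ncfQ β 1
      simp [ncfP, ncfQ, consNCF]; ring
    · show consNCF c β 2 * ncfQ (consNCF c β) 1 - ncfQ (consNCF c β) 0 = ncfP β 1
      simp [ncfP, ncfQ, consNCF]
  | (m+2) => by
    obtain ⟨h1, h2⟩ := ncf_cons c β m
    obtain ⟨h3, h4⟩ := ncf_cons c β (m+1)
    have hc : consNCF c β (m+3) = β (m+2) := by simp [consNCF]
    constructor
    · show consNCF c β (m+3) * ncfP (consNCF c β) (m+2) - ncfP (consNCF c β) (m+1)
        = c * (β (m+2) * ncfP β (m+1) - ncfP β m) - (β (m+2) * ncfQ β (m+1) - ncfQ β m)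
      rw [hc, h1, h3]
      ring
    · show consNCF c β (m+3) * ncfQ (consNCF c β) (m+2) - ncfQ (consNCF c β) (m+1)
        = β (m+2) * ncfP β (m+1) - ncfP β m
      rw [hc, h2, h4]

lemma main : ∀ (k : ℕ) (a b : ℤ), b.natAbs ≤ k → IsCoprime a b → b < a → 1 ≤ b →
    Odd (a + b) →
    ∃ (n : ℕ) (α : ℕ → ℤ) (s : ℤ), 1 ≤ n ∧
      (∀ i, 1 ≤ i → i ≤ n → Even (α i) ∧ 2 ≤ |α i|) ∧
      2 ≤ α 1 ∧ (s = 1 ∨ s = -1) ∧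
      ncfP α n = s * a ∧ ncfQ α n = s * b ∧ (1 < b → 2 ≤ n) := by
  intro k
  induction k with
  | zero => intro a b hk _ _ hb _; omega
  | succ k ih =>
    intro a b hk hcop hab hb hodd
    rcases eq_or_lt_of_le hb with hb1 | hb2
    · -- b = 1
      have hb1 : b = 1 := hb1.symm
      subst hb1
      have hae : Even a := by
        obtain ⟨w, hw⟩ := hodd
        exact ⟨w, by omega⟩
      obtain ⟨w, hw⟩ := hae
      refine ⟨1, fun _ => a, 1, le_refl 1, ?_, ?_, Or.inl rfl, ?_, ?_, ?_⟩
      · intro i h1 h2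
        refine ⟨⟨w, hw⟩, ?_⟩
        show 2 ≤ |a|
        rw [abs_of_nonneg (by omega)]
        omega
      · show 2 ≤ a
        omega
      · simp [ncfP]
      · simp [ncfQ]
      · omega
    · -- 1 < b
      have hbnd : ¬ (b ∣ a) := by
        intro hdvd
        have := Int.isUnit_iff.mp (hcop.isUnit_of_dvd' hdvd dvd_rfl)
        omega
      set k0 : ℤ := (a + b) / (2 * b) with hk0
      set ρ : ℤ := (a + b) % (2 * b) with hρ
      have hdm : 2 * b * k0 + ρ = a + b := Int.mul_ediv_add_emod (a + b) (2 * b)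
      have hρ0 : 0 ≤ ρ := Int.emod_nonneg _ (by omega)
      have hρlt : ρ < 2 * b := Int.emod_lt_of_pos _ (by omega)
      set c : ℤ := 2 * k0 with hc
      set r : ℤ := b - ρ with hrdef
      have hra : c * b - a = r := by
        rw [hc, hrdef]; linear_combination hdm
      have hrneb : r ≠ b := by
        intro h
        exact hbnd ⟨c - 1, by linear_combination -hra - h⟩
      have hrne0 : r ≠ 0 := by
        intro h
        exact hbnd ⟨c, by linear_combination -hra - h⟩
      have hrlt : -b < r ∧ r < b := by constructor <;> omega
      -- c is even and ≥ 2
      have hceven : Even c := ⟨k0, by rw [hc]; ring⟩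
      have hcb : c * b = a + r := by linear_combination hra
      have hcpos : 0 < c := by
        by_contra h
        push_neg at h
        have : c * b ≤ 0 := mul_nonpos_of_nonpos_of_nonneg h (by omega)
        omega
      have hc2 : 2 ≤ c := by rw [hc] at hcpos ⊢; omega
      -- coprimality of b and r
      have hcopbr : IsCoprime b r := by
        have h1 : IsCoprime b (-a) := hcop.symm.neg_right
        have h2 : IsCoprime b (-a + b * c) := h1.add_mul_left_right c
        have : -a + b * c = r := by linear_combination hra
        rwa [this] at h2
      -- parity
      have hoddbr : Odd (b + r) := by
        obtain ⟨w, hw⟩ := hodd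
        refine ⟨w - a + k0 * b, ?_⟩
        have : c * b = 2 * (k0 * b) := by rw [hc]; ring
        set K := k0 * b
        omega
      rcases lt_or_gt_of_ne hrne0 with hrneg | hrpos
      · -- r < 0 : use pair (b, -r), then negate
        have hIH := ih b (-r) (by omega) hcopbr.neg_right (by omega) (by omega)
          (by obtain ⟨w, hw⟩ := hoddbr; exact ⟨w - r, by omega⟩)
        obtain ⟨m, β, t, hm1, hβ, hβ1, hts, hP, hQ, _⟩ := hIH
        obtain ⟨hN, hNQ⟩ := ncf_neg β m
        refine ⟨m + 1, consNCF c (fun i => -β i), (-1)^m * t, by omega, ?_, ?_, ?_, ?_, ?_, by omega⟩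
        · intro i h1 h2
          rcases Nat.eq_or_lt_of_le h1 with h | h
          · have hi1 : i = 1 := h.symm
            subst hi1
            have h1' : consNCF c (fun i => -β i) 1 = c := by simp [consNCF]
            rw [h1']
            exact ⟨hceven, by rw [abs_of_nonneg (by omega)]; exact hc2⟩
          · have hi : consNCF c (fun i => -β i) i = -β (i - 1) := by
              simp [consNCF]; omega
            rw [hi]
            obtain ⟨he, ha⟩ := hβ (i - 1) (by omega) (by omega)
            exact ⟨he.neg, by rwa [abs_neg]⟩
        · show 2 ≤ consNCF c (fun i => -β i) 1
          simpa [consNCF] using hc2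
        · rcases hts with h | h <;> rcases Nat.even_or_odd m with he | he
          · left; rw [h, he.neg_one_pow]; ring
          · right; rw [h, he.neg_one_pow]; ring
          · right; rw [h, he.neg_one_pow]; ring
          · left; rw [h, he.neg_one_pow]; ring
        · rw [(ncf_cons c (fun i => -β i) m).1, hN, hNQ, hP, hQ]
          have : a = c * b - r := by linear_combination -hra
          rw [this]; ring
        · rw [(ncf_cons c (fun i => -β i) m).2, hN, hP]; ring
      · -- r > 0
        have hIH := ih b r (by omega) hcopbr (by omega) (by omega) hoddbr
        obtain ⟨m, β, t, hm1, hβ, hβ1, hts, hP, hQ, _⟩ := hIH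
        refine ⟨m + 1, consNCF c β, t, by omega, ?_, ?_, hts, ?_, ?_, by omega⟩
        · intro i h1 h2
          rcases Nat.eq_or_lt_of_le h1 with h | h
          · have hi1 : i = 1 := h.symm
            subst hi1
            have h1' : consNCF c β 1 = c := by simp [consNCF]
            rw [h1']
            exact ⟨hceven, by rw [abs_of_nonneg (by omega)]; exact hc2⟩
          · have hi : consNCF c β i = β (i - 1) := by simp [consNCF]; omega
            rw [hi]
            exact hβ (i - 1) (by omega) (by omega)
        · show 2 ≤ consNCF c β 1
          simpa [consNCF] using hc2
        · rw [(ncf_cons c β m).1, hP, hQ]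
          have : a = c * b - r := by linear_combination -hra
          rw [this]; ring
        · rw [(ncf_cons c β m).2, hP]

/-- any coprime pair `p > q ≥ 1` with `p + q` odd admits a negative
continued fraction expansion `p/q = [α 1, …, α n]` with all `α i` even, `|α i| ≥ 2`,
`α 1 ≥ 2`; moreover `n ≥ 2` if `q > 1`. -/
theorem stmt0 (p q : ℤ) (hcop : IsCoprime p q) (hpq : q < p) (hq : 1 ≤ q)
    (hodd : Odd (p + q)) :
    ∃ (n : ℕ) (α : ℕ → ℤ), 1 ≤ n ∧
      (∀ i, 1 ≤ i → i ≤ n → Even (α i) ∧ 2 ≤ |α i|) ∧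
      2 ≤ α 1 ∧
      ncfQ α n ≠ 0 ∧
      (p : ℚ) / (q : ℚ) = (ncfP α n : ℚ) / (ncfQ α n : ℚ) ∧
      (1 < q → 2 ≤ n) := by
  obtain ⟨n, α, s, hn, hev, hα1, hs, hP, hQ, hn2⟩ :=
    main q.natAbs p q le_rfl hcop hpq hq hodd
  have hsne : s ≠ 0 := by rcases hs with h | h <;> simp [h]
  refine ⟨n, α, hn, hev, hα1, ?_, ?_, hn2⟩
  · rw [hQ]
    intro h
    rcases mul_eq_zero.mp h with h | h
    · exact hsne h
    · omega
  · rw [hP, hQ]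
    push_cast
    rw [mul_div_mul_left]
    exact_mod_cast hsne
end

section
/- Let p and q be coprime integers with p even, q odd and p > q > 0, and suppose p/q = [α_1, …, α_n] is a negative continued fraction expansion (i.e. q_n ≠ 0 and p/q = p_n/q_n) in which every α_i is even and |α_i| ≥ 2. Then n is odd. -/
lemma ncfP_parity (α : ℕ → ℤ) :
    ∀ n, (∀ i, 1 ≤ i → i ≤ n → Even (α i)) →
      ((Even n → Odd (ncfP α n)) ∧ (Odd n → Even (ncfP α n)))
  | 0 => fun _ => by simp [ncfP, Nat.odd_iff]
  | 1 => fun h => by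
      constructor
      · intro he; simp [Nat.even_iff] at he
      · intro _; simpa [ncfP] using h 1 le_rfl le_rfl
  | (i+2) => fun h => by
      have ih := ncfP_parity α i (fun j hj1 hj2 => h j hj1 (by omega))
      have hα2 : Even (α (i+2)) := h (i+2) (by omega) le_rfl
      have hev : Even (α (i+2) * ncfP α (i+1)) := hα2.mul_right _
      constructor
      · intro he
        have hei : Even i := by
          rw [Nat.even_iff] at he ⊢; omega
        have : Odd (ncfP α i) := ih.1 hei
        simpa [ncfP] using hev.sub_odd this
      · intro ho
        have hoi : Odd i := by
          rw [Nat.odd_iff] at ho ⊢; omega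
        have h3 : Even (ncfP α i) := ih.2 hoi
        show Even (ncfP α (i+2))
        rw [ncfP, Int.even_sub]
        exact ⟨fun _ => h3, fun _ => hev⟩

/-- if `p` is even, `q` is odd, `p > q > 0` are coprime, and
`p/q = [α 1, …, α n]` is a negative continued fraction expansion with all `α i`
even and `|α i| ≥ 2`, then `n` is odd. -/
theorem stmt6 (p q : ℤ) (hcop : IsCoprime p q) (hp : Even p) (hq : Odd q)
    (h1 : q < p) (h2 : 0 < q) (n : ℕ) (α : ℕ → ℤ)
    (hα : ∀ i, 1 ≤ i → i ≤ n → Even (α i) ∧ 2 ≤ |α i|)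
    (hqn : ncfQ α n ≠ 0)
    (hval : (p : ℚ) / (q : ℚ) = (ncfP α n : ℚ) / (ncfQ α n : ℚ)) :
    Odd n := by
  have hq0 : (q : ℚ) ≠ 0 := by exact_mod_cast h2.ne'
  have hqn' : ((ncfQ α n : ℤ) : ℚ) ≠ 0 := by exact_mod_cast hqn
  have hcross : p * ncfQ α n = ncfP α n * q := by
    have := (div_eq_div_iff hq0 hqn').mp hval
    exact_mod_cast this
  have hpn : Even (ncfP α n) := by
    have : Even (ncfP α n * q) := hcross ▸ hp.mul_right _
    rcases (Int.even_mul.mp this) with h' | h'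
    · exact h'
    · exact absurd h' (Int.not_even_iff_odd.mpr hq)
  by_contra hne
  have hev : Even n := Nat.not_odd_iff_even.mp hne
  have := (ncfP_parity α n (fun i h1 h2 => (hα i h1 h2).1)).1 hev
  exact (Int.not_even_iff_odd.mpr this) hpn
end

section
/- Let d_1, …, d_n be real numbers such that all the tail values t_1, …, t_n are defined and nonzero. Then the chain matrix A(d_1,…,d_n) is congruent over ℝ to the diagonal matrix diag(t_1, …, t_n): there exists an invertible real n×n matrix P with Pᵀ·A(d_1,…,d_n)·P = diag(t_1, …, t_n). -/
open Matrix


/-- Tail values of the negative continued fraction: `t n = d n` and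
`t i = d i - 1 / t (i+1)` for `i < n`. -/
noncomputable def tailVal (d : ℕ → ℝ) (n : ℕ) (i : ℕ) : ℝ :=
  if h : n ≤ i then d n
  else d i - 1 / tailVal d n (i + 1)
termination_by n - i
decreasing_by omega

/-- The `n × n` chain (tridiagonal) matrix with diagonal entries
`d 1, …, d n` and off-diagonal entries `1`. -/
def chainMatrix (d : ℕ → ℝ) (n : ℕ) : Matrix (Fin n) (Fin n) ℝ :=
  Matrix.of fun i j =>
    if i = j then d (i.1 + 1)
    else if i.1 + 1 = j.1 ∨ j.1 + 1 = i.1 then 1 else 0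

noncomputable def Umat (d : ℕ → ℝ) (n : ℕ) : Matrix (Fin n) (Fin n) ℝ :=
  Matrix.of fun i k =>
    if (k : ℕ) = (i : ℕ) then (1 : ℝ)
    else if (k : ℕ) = (i : ℕ) + 1 then 1 / tailVal d n ((k : ℕ) + 1) else 0

lemma Umat_det (d : ℕ → ℝ) (n : ℕ) : (Umat d n).det = 1 := by
  rw [Matrix.det_of_upperTriangular]
  · apply Finset.prod_eq_one
    intro i _
    simp [Umat]
  · intro i j h
    simp only [id] at h
    have h1 : (j : ℕ) ≠ (i : ℕ) := by omega
    have h2 : (j : ℕ) ≠ (i : ℕ) + 1 := by omega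
    simp [Umat, h1, h2]

lemma chain_eq (n : ℕ) (d : ℕ → ℝ)
    (ht : ∀ i, 1 ≤ i → i ≤ n → tailVal d n i ≠ 0) :
    chainMatrix d n =
      Umat d n * Matrix.diagonal (fun k : Fin n => tailVal d n ((k : ℕ) + 1)) *
        (Umat d n)ᵀ := by
  have ht' : ∀ k : Fin n, tailVal d n ((k : ℕ) + 1) ≠ 0 := fun k =>
    ht ((k : ℕ) + 1) (by omega) (by omega)
  ext i j
  rw [Matrix.mul_apply]
  simp only [Matrix.mul_diagonal, Matrix.transpose_apply]
  by_cases hij : i = j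
  · subst hij
    by_cases hn : (i : ℕ) + 1 < n
    · set i' : Fin n := ⟨(i : ℕ) + 1, hn⟩ with hi'
      have hne : i ≠ i' := by
        intro h; apply_fun (fun x => (x : ℕ)) at h; simp [hi'] at h
      have hsum : ∑ k, Umat d n i k * tailVal d n ((k : ℕ) + 1) * Umat d n i k =
          ∑ k ∈ ({i, i'} : Finset (Fin n)),
            Umat d n i k * tailVal d n ((k : ℕ) + 1) * Umat d n i k := by
        refine (Finset.sum_subset (Finset.subset_univ _) ?_).symm
        intro k _ hk
        simp only [Finset.mem_insert, Finset.mem_singleton, not_or] at hk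
        have h1 : (k : ℕ) ≠ (i : ℕ) := fun h => hk.1 (Fin.ext h)
        have h2 : (k : ℕ) ≠ (i : ℕ) + 1 := fun h => hk.2 (Fin.ext h)
        simp [Umat, h1, h2]
      rw [hsum, Finset.sum_pair hne]
      have hUi : Umat d n i i = 1 := by simp [Umat]
      have hUi' : Umat d n i i' = 1 / tailVal d n ((i : ℕ) + 2) := by
        simp [Umat, hi']
      have hti' : tailVal d n ((i' : ℕ) + 1) = tailVal d n ((i : ℕ) + 2) := by
        simp [hi']
      rw [hUi, hUi', hti']
      have hx := ht' i'
      rw [hti'] at hx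
      have hchain : chainMatrix d n i i = d ((i : ℕ) + 1) := by simp [chainMatrix]
      rw [hchain]
      have htail : tailVal d n ((i : ℕ) + 1) =
          d ((i : ℕ) + 1) - 1 / tailVal d n ((i : ℕ) + 2) := by
        rw [tailVal]
        rw [dif_neg (by omega)]
      rw [htail]
      field_simp
      ring
    · have hn' : (i : ℕ) + 1 = n := by omega
      rw [Finset.sum_eq_single i]
      · have hv : tailVal d n ((i : ℕ) + 1) = d n := by
          rw [tailVal, dif_pos (by omega)]
        have hw : tailVal d n n = d n := by rw [tailVal, dif_pos le_rfl]
        simp [Umat, chainMatrix, hv, hw, hn']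
      · intro k _ hk
        have h1 : (k : ℕ) ≠ (i : ℕ) := fun h => hk (Fin.ext h)
        have h2 : (k : ℕ) ≠ (i : ℕ) + 1 := by omega
        simp [Umat, h1, h2]
      · simp
  · by_cases h1 : (i : ℕ) + 1 = (j : ℕ)
    · rw [Finset.sum_eq_single j]
      · have hUij : Umat d n i j = 1 / tailVal d n ((j : ℕ) + 1) := by
          have ha : (j : ℕ) ≠ (i : ℕ) := by omega
          simp only [Umat, Matrix.of_apply]
          rw [if_neg ha, if_pos h1.symm]
        have hUjj : Umat d n j j = 1 := by simp [Umat]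
        rw [hUij, hUjj]
        have hchain : chainMatrix d n i j = 1 := by
          simp [chainMatrix, hij, h1]
        rw [hchain]
        field_simp
        rw [div_self (ht' j)]
      · intro k _ hk
        have hk1 : (k : ℕ) ≠ (j : ℕ) := fun h => hk (Fin.ext h)
        by_cases hki : (k : ℕ) = (i : ℕ)
        · have ha : (k : ℕ) ≠ (j : ℕ) + 1 := by omega
          have hb : Umat d n j k = 0 := by simp [Umat, hk1, ha]
          simp [hb]
        · have ha : (k : ℕ) ≠ (i : ℕ) + 1 := by omega
          have hb : Umat d n i k = 0 := by simp [Umat, hki, ha]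
          simp [hb]
      · simp
    · by_cases h2 : (j : ℕ) + 1 = (i : ℕ)
      · rw [Finset.sum_eq_single i]
        · have hUii : Umat d n i i = 1 := by simp [Umat]
          have hUji : Umat d n j i = 1 / tailVal d n ((i : ℕ) + 1) := by
            have ha : (i : ℕ) ≠ (j : ℕ) := by omega
            simp only [Umat, Matrix.of_apply]
            rw [if_neg ha, if_pos h2.symm]
          rw [hUii, hUji]
          have hchain : chainMatrix d n i j = 1 := by
            simp [chainMatrix, hij, h2]
          rw [hchain]
          field_simp
          rw [div_self (ht' i)]
        · intro k _ hk
          have hk1 : (k : ℕ) ≠ (i : ℕ) := fun h => hk (Fin.ext h)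
          by_cases hkj : (k : ℕ) = (j : ℕ)
          · have ha : (k : ℕ) ≠ (i : ℕ) + 1 := by omega
            have hb : Umat d n i k = 0 := by simp [Umat, hk1, ha]
            simp [hb]
          · have ha : (k : ℕ) ≠ (j : ℕ) + 1 := by omega
            have hb : Umat d n j k = 0 := by simp [Umat, hkj, ha]
            simp [hb]
        · simp
      · have hchain : chainMatrix d n i j = 0 := by
          simp [chainMatrix, hij]
          omega
        rw [hchain]
        refine (Finset.sum_eq_zero ?_).symm
        intro k _
        have hij' : (i : ℕ) ≠ (j : ℕ) := fun h => hij (Fin.ext h)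
        by_cases hki : (k : ℕ) = (i : ℕ)
        · have ha : (k : ℕ) ≠ (j : ℕ) := by omega
          have hb : (k : ℕ) ≠ (j : ℕ) + 1 := by omega
          have hc : Umat d n j k = 0 := by simp [Umat, ha, hb]
          simp [hc]
        · by_cases hki' : (k : ℕ) = (i : ℕ) + 1
          · have ha : (k : ℕ) ≠ (j : ℕ) := by omega
            have hb : (k : ℕ) ≠ (j : ℕ) + 1 := by omega
            have hc : Umat d n j k = 0 := by simp [Umat, ha, hb]
            simp [hc]
          · have hc : Umat d n i k = 0 := by simp [Umat, hki, hki']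
            simp [hc]

/-- if all tail values `t 1, …, t n` are nonzero, the chain
matrix `A(d 1, …, d n)` is congruent over ℝ to `diag(t 1, …, t n)`. -/
theorem stmt7 (n : ℕ) (d : ℕ → ℝ)
    (ht : ∀ i, 1 ≤ i → i ≤ n → tailVal d n i ≠ 0) :
    ∃ P : Matrix (Fin n) (Fin n) ℝ, IsUnit P ∧
      P.transpose * chainMatrix d n * P =
        Matrix.diagonal (fun i : Fin n => tailVal d n (i.1 + 1)) := by
  set U := Umat d n with hU
  have hdet : IsUnit U.det := by rw [hU, Umat_det]; exact isUnit_one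
  refine ⟨(U⁻¹)ᵀ, ?_, ?_⟩
  · rw [Matrix.isUnit_iff_isUnit_det]
    simp [Matrix.det_transpose, Matrix.det_nonsing_inv, hU, Umat_det]
  · rw [Matrix.transpose_transpose, chain_eq n d ht]
    have e1 : U⁻¹ * U = 1 := Matrix.nonsing_inv_mul _ hdet
    have e2 : Uᵀ * (U⁻¹)ᵀ = 1 := by
      rw [← Matrix.transpose_mul, e1, Matrix.transpose_one]
    calc U⁻¹ * (U * Matrix.diagonal (fun k : Fin n => tailVal d n ((k : ℕ) + 1)) * Uᵀ) * (U⁻¹)ᵀ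
        = (U⁻¹ * U) * Matrix.diagonal (fun k : Fin n => tailVal d n ((k : ℕ) + 1)) *
            (Uᵀ * (U⁻¹)ᵀ) := by
          simp only [Matrix.mul_assoc]
      _ = Matrix.diagonal (fun i : Fin n => tailVal d n (i.1 + 1)) := by
          rw [e1, e2, Matrix.one_mul, Matrix.mul_one]
end

section
/- Let α_1, …, α_n be integers with |α_i| ≥ 2 for all i. Then the chain matrix A(α_1,…,α_n) (viewed over ℝ) is nonsingular and its signature equals Σ_{i=1}^n sgn(α_i). -/
/-- The signature of a real symmetric matrix: the number of positive
eigenvalues minus the number of negative eigenvalues, with multiplicity. -/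
noncomputable def matSignature {n : ℕ} (A : Matrix (Fin n) (Fin n) ℝ)
    (hA : A.IsHermitian) : ℤ :=
  ((Finset.univ.filter fun i => 0 < hA.eigenvalues i).card : ℤ) -
  ((Finset.univ.filter fun i => hA.eigenvalues i < 0).card : ℤ)

open Matrix Finset

noncomputable section

def cdelta (a : ℕ → ℝ) : ℕ → ℝ
  | 0 => 1
  | k + 1 => if k = 0 then a 1 else a (k + 1) - 1 / cdelta a k

lemma cdelta_one (a : ℕ → ℝ) : cdelta a 1 = a 1 := by simp [cdelta]

lemma cdelta_succ (a : ℕ → ℝ) (k : ℕ) (hk : 1 ≤ k) :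
    cdelta a (k + 1) = a (k + 1) - 1 / cdelta a k := by
  rw [cdelta, if_neg (by omega)]

lemma cdelta_prop (a : ℕ → ℝ) (k : ℕ) (hk : 1 ≤ k)
    (h : ∀ j, 1 ≤ j → j ≤ k → 2 ≤ |a j|) :
    1 ≤ |cdelta a k| ∧ (0 < cdelta a k ↔ 0 < a k) := by
  induction k with
  | zero => omega
  | succ k ih =>
    rcases Nat.eq_or_lt_of_le hk with h1 | h1
    · have hk0 : k = 0 := by omega
      subst hk0
      rw [cdelta_one]
      have := h 1 le_rfl (by omega)
      exact ⟨by linarith, Iff.rfl⟩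
    · have hk' : 1 ≤ k := by omega
      obtain ⟨habs, hiff⟩ := ih hk' (fun j hj hjk => h j hj (by omega))
      have hne : cdelta a k ≠ 0 := by
        intro h0; rw [h0] at habs; simp at habs; linarith
      have hinv : |1 / cdelta a k| ≤ 1 := by
        rw [abs_div, abs_one, div_le_one (by positivity)]
        exact habs
      have h2 : 2 ≤ |a (k + 1)| := h (k + 1) (by omega) le_rfl
      rw [cdelta_succ a k hk']
      have hinv1 : -1 ≤ 1 / cdelta a k := by
        have := abs_le.mp hinv; linarith [this.1]
      have hinv2 : 1 / cdelta a k ≤ 1 := (abs_le.mp hinv).2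
      rcases le_or_gt (a (k+1)) 0 with hneg | hpos
      · have : a (k + 1) ≤ -2 := by
          cases abs_cases (a (k+1)) with
          | inl hc => linarith [hc.1]
          | inr hc => linarith [hc.1]
        constructor
        · rw [abs_of_nonpos (by linarith)]; linarith
        · constructor <;> intro hh <;> linarith
      · have : 2 ≤ a (k + 1) := by
          cases abs_cases (a (k+1)) with
          | inl hc => linarith [hc.1]
          | inr hc => linarith
        constructor
        · rw [abs_of_nonneg (by linarith)]; linarith
        · constructor <;> intro hh <;> linarith

lemma cdelta_ne_zero (a : ℕ → ℝ) (k : ℕ) (hk : 1 ≤ k)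
    (h : ∀ j, 1 ≤ j → j ≤ k → 2 ≤ |a j|) : cdelta a k ≠ 0 := by
  intro h0
  have := (cdelta_prop a k hk h).1
  rw [h0] at this; simp at this; linarith
/-- Unit lower bidiagonal matrix in the LDLᵀ decomposition. -/
def Lmat (a : ℕ → ℝ) (n : ℕ) : Matrix (Fin n) (Fin n) ℝ :=
  Matrix.of fun i j =>
    if i = j then 1 else if j.1 + 1 = i.1 then 1 / cdelta a (j.1 + 1) else 0

lemma sum_ite_pred {n : ℕ} (i : Fin n) (c : ℕ → ℝ) :
    ∑ k : Fin n, (if k.1 + 1 = i.1 then c k.1 else 0) =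
      if i.1 = 0 then 0 else c (i.1 - 1) := by
  by_cases h0 : i.1 = 0
  · rw [if_pos h0]
    exact Finset.sum_eq_zero fun k _ => if_neg (by omega)
  · rw [if_neg h0]
    have hm : i.1 - 1 < n := by omega
    rw [Finset.sum_eq_single ⟨i.1 - 1, hm⟩]
    · rw [if_pos (show i.1 - 1 + 1 = i.1 by omega)]
    · intro k _ hne
      refine if_neg fun hc => hne (Fin.ext ?_)
      show k.1 = i.1 - 1
      omega
    · intro h; exact absurd (Finset.mem_univ _) h

lemma chain_factor (a : ℕ → ℝ) (n : ℕ)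
    (hnz : ∀ k : Fin n, cdelta a (k.1 + 1) ≠ 0) :
    chainMatrix a n =
      Lmat a n * Matrix.diagonal (fun i : Fin n => cdelta a (i.1 + 1)) * (Lmat a n)ᵀ := by
  ext i j
  rw [Matrix.mul_apply]
  have expand : ∀ k : Fin n,
      (Lmat a n * Matrix.diagonal (fun i : Fin n => cdelta a (i.1 + 1))) i k
        * (Lmat a n)ᵀ k j =
      (if k = i ∧ k = j then cdelta a (k.1 + 1) else 0)
      + (if k = i ∧ k.1 + 1 = j.1 then 1 else 0)
      + (if k = j ∧ k.1 + 1 = i.1 then 1 else 0)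
      + (if k.1 + 1 = i.1 ∧ k.1 + 1 = j.1 then 1 / cdelta a (k.1 + 1) else 0) := by
    intro k
    have hk := hnz k
    rw [Matrix.mul_diagonal, Matrix.transpose_apply]
    simp only [Lmat, Matrix.of_apply, Fin.ext_iff]
    split_ifs <;> first | omega | (field_simp; try ring)
  rw [Finset.sum_congr rfl (fun k _ => expand k)]
  rw [Finset.sum_add_distrib, Finset.sum_add_distrib, Finset.sum_add_distrib]
  have S1 : ∑ k : Fin n, (if k = i ∧ k = j then cdelta a (k.1 + 1) else 0)
      = if i = j then cdelta a (i.1 + 1) else 0 := by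
    rw [Finset.sum_congr rfl (fun k _ => show _ = if k = i then (if i = j then cdelta a (i.1 + 1) else 0) else 0 by
      rcases eq_or_ne k i with rfl | hk
      · simp
      · simp [hk])]
    rw [Finset.sum_ite_eq' Finset.univ i]
    simp
  have S2 : ∑ k : Fin n, (if k = i ∧ k.1 + 1 = j.1 then (1:ℝ) else 0)
      = if i.1 + 1 = j.1 then 1 else 0 := by
    rw [Finset.sum_congr rfl (fun k _ => show _ = if k = i then (if i.1 + 1 = j.1 then (1:ℝ) else 0) else 0 by
      rcases eq_or_ne k i with rfl | hk
      · simp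
      · simp [hk])]
    rw [Finset.sum_ite_eq' Finset.univ i]
    simp
  have S3 : ∑ k : Fin n, (if k = j ∧ k.1 + 1 = i.1 then (1:ℝ) else 0)
      = if j.1 + 1 = i.1 then 1 else 0 := by
    rw [Finset.sum_congr rfl (fun k _ => show _ = if k = j then (if j.1 + 1 = i.1 then (1:ℝ) else 0) else 0 by
      rcases eq_or_ne k j with rfl | hk
      · simp
      · simp [hk])]
    rw [Finset.sum_ite_eq' Finset.univ j]
    simp
  rw [S1, S2, S3]
  by_cases hij : i = j
  · subst hij
    have S4 : ∑ k : Fin n, (if k.1 + 1 = i.1 ∧ k.1 + 1 = i.1 then 1 / cdelta a (k.1 + 1) else 0)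
        = if i.1 = 0 then 0 else 1 / cdelta a i.1 := by
      rw [Finset.sum_congr rfl (fun k _ => show _ = if k.1 + 1 = i.1 then (fun m => 1 / cdelta a (m + 1)) k.1 else 0 by
        simp)]
      rw [sum_ite_pred i (fun m => 1 / cdelta a (m + 1))]
      by_cases h0 : i.1 = 0
      · simp [h0]
      · rw [if_neg h0, if_neg h0, show i.1 - 1 + 1 = i.1 by omega]
    rw [S4, if_pos rfl, if_neg (show ¬(i.1 + 1 = i.1) by omega)]
    have lhs : chainMatrix a n i i = a (i.1 + 1) := by simp [chainMatrix]
    rw [lhs]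
    by_cases h0 : i.1 = 0
    · rw [h0]
      simp [cdelta_one]
    · rw [if_neg h0, show i.1 + 1 = (i.1) + 1 from rfl, cdelta_succ a i.1 (by omega)]
      ring
  · have S4 : ∑ k : Fin n, (if k.1 + 1 = i.1 ∧ k.1 + 1 = j.1 then 1 / cdelta a (k.1 + 1) else 0)
        = 0 := by
      refine Finset.sum_eq_zero fun k _ => if_neg fun hc => hij (Fin.ext ?_)
      omega
    rw [S4, if_neg hij]
    have lhs : chainMatrix a n i j
        = if i.1 + 1 = j.1 ∨ j.1 + 1 = i.1 then (1:ℝ) else 0 := by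
      simp [chainMatrix, hij]
    rw [lhs]
    split_ifs <;> first | omega | ring
lemma Lmat_det_aux {n : ℕ} (M : Matrix (Fin n) (Fin n) ℝ)
    (hdiag : ∀ i, M i i = 1) (hlow : ∀ i j : Fin n, i < j → M i j = 0) :
    M.det = 1 := by
  have h : M.BlockTriangular OrderDual.toDual := by
    intro i j hij
    exact hlow i j hij
  rw [Matrix.det_of_lowerTriangular M h]
  simp [hdiag]

/-- Key counting lemma: if `∑ e i x i ^ 2 = ∑ d i (M x) i ^ 2` for all `x` and the `d i`
are nonzero, then the number of positive `e`'s is at most the number of positive `d`'s. -/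
lemma posCard_le {n : ℕ} (d e : Fin n → ℝ) (hd : ∀ i, d i ≠ 0)
    (M : Matrix (Fin n) (Fin n) ℝ)
    (h : ∀ x : Fin n → ℝ, ∑ i, e i * x i ^ 2 = ∑ i, d i * (M *ᵥ x) i ^ 2) :
    (univ.filter fun i => 0 < e i).card ≤ (univ.filter fun i => 0 < d i).card := by
  by_contra hlt
  push_neg at hlt
  set S : Finset (Fin n) := univ.filter fun i => 0 < e i with hS
  set T : Finset (Fin n) := univ.filter fun i => 0 < d i with hT
  -- extension-by-zero linear map
  classical
  let ext : (S → ℝ) →ₗ[ℝ] (Fin n → ℝ) :=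
    { toFun := fun y i => if h : i ∈ S then y ⟨i, h⟩ else 0
      map_add' := by intro y z; funext i; dsimp; split <;> simp
      map_smul' := by intro c y; funext i; dsimp; split <;> simp }
  let G : (S → ℝ) →ₗ[ℝ] (T → ℝ) :=
    (LinearMap.funLeft ℝ ℝ (Subtype.val : T → Fin n)) ∘ₗ M.mulVecLin ∘ₗ ext
  have hninj : ¬ Function.Injective G := by
    intro hinj
    have h1 := LinearMap.finrank_le_finrank_of_injective hinj
    rw [Module.finrank_fintype_fun_eq_card, Module.finrank_fintype_fun_eq_card,
      Fintype.card_coe, Fintype.card_coe] at h1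
    omega
  rw [Function.not_injective_iff] at hninj
  obtain ⟨y, z, hyz, hne⟩ := hninj
  set w := y - z with hw
  have hw0 : w ≠ 0 := sub_ne_zero.mpr hne
  have hGw : G w = 0 := by rw [hw, map_sub, hyz, sub_self]
  set x : Fin n → ℝ := ext w with hx
  have hxmem : ∀ i (hi : i ∈ S), x i = w ⟨i, hi⟩ := by
    intro i hi; simp only [hx, ext, LinearMap.coe_mk, AddHom.coe_mk, dif_pos hi]
  have hxnot : ∀ i, i ∉ S → x i = 0 := by
    intro i hi; simp only [hx, ext, LinearMap.coe_mk, AddHom.coe_mk, dif_neg hi]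
  -- LHS positive
  have hpos : 0 < ∑ i, e i * x i ^ 2 := by
    obtain ⟨j, hj⟩ : ∃ j, w j ≠ 0 := by
      by_contra hc; push_neg at hc; exact hw0 (funext fun j => hc j)
    have hjS : (j : Fin n) ∈ S := j.2
    refine Finset.sum_pos' (fun i _ => ?_) ⟨j, Finset.mem_univ _, ?_⟩
    · by_cases hi : i ∈ S
      · have : 0 < e i := (Finset.mem_filter.mp hi).2
        positivity
      · rw [hxnot i hi]; simp
    · have hej : 0 < e j := (Finset.mem_filter.mp hjS).2
      have hxj : x (j : Fin n) = w ⟨(j : Fin n), hjS⟩ := hxmem _ hjS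
      have : x (j : Fin n) ≠ 0 := by
        rw [hxj]; convert hj using 2
      positivity
  -- RHS nonpositive
  have hneg : ∑ i, d i * (M *ᵥ x) i ^ 2 ≤ 0 := by
    refine Finset.sum_nonpos fun i _ => ?_
    by_cases hi : i ∈ T
    · have : (M *ᵥ x) i = 0 := by
        have := congrFun hGw ⟨i, hi⟩
        simpa [G, LinearMap.funLeft, ext, hx] using this
      rw [this]; simp
    · have hdi : d i < 0 := by
        rcases lt_or_gt_of_ne (hd i) with h' | h'
        · exact h'
        · exact absurd (show i ∈ T from Finset.mem_filter.mpr ⟨Finset.mem_univ i, h'⟩) hi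
      have : (0:ℝ) ≤ (M *ᵥ x) i ^ 2 := sq_nonneg _
      nlinarith
  rw [h x] at hpos
  linarith

lemma dot_diagonal_eq_sum {n : ℕ} (d : Fin n → ℝ) (x : Fin n → ℝ) :
    x ⬝ᵥ (Matrix.diagonal d) *ᵥ x = ∑ i, d i * x i ^ 2 := by
  simp only [dotProduct, mulVec_diagonal]
  exact Finset.sum_congr rfl fun i _ => by ring

lemma dot_congr {n : ℕ} (P B : Matrix (Fin n) (Fin n) ℝ) (x : Fin n → ℝ) :
    x ⬝ᵥ (Pᵀ * B * P) *ᵥ x = (P *ᵥ x) ⬝ᵥ B *ᵥ (P *ᵥ x) := by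
  rw [← Matrix.mulVec_mulVec, ← Matrix.mulVec_mulVec,
    Matrix.dotProduct_mulVec, Matrix.vecMul_transpose]

lemma dot_congr' {n : ℕ} (P B : Matrix (Fin n) (Fin n) ℝ) (x : Fin n → ℝ) :
    x ⬝ᵥ (P * B * Pᵀ) *ᵥ x = (Pᵀ *ᵥ x) ⬝ᵥ B *ᵥ (Pᵀ *ᵥ x) := by
  have h := dot_congr Pᵀ B x
  rwa [Matrix.transpose_transpose] at h

end
/-- if `α 1, …, α n` are integers with `|α i| ≥ 2`, the chain
matrix `A(α 1, …, α n)` over ℝ is nonsingular and its signature is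
`∑ sgn (α i)`. -/
theorem stmt9 (n : ℕ) (α : ℕ → ℤ)
    (hα : ∀ i, 1 ≤ i → i ≤ n → 2 ≤ |α i|)
    (hA : (chainMatrix (fun j => (α j : ℝ)) n).IsHermitian) :
    (chainMatrix (fun j => (α j : ℝ)) n).det ≠ 0 ∧
    matSignature (chainMatrix (fun j => (α j : ℝ)) n) hA =
      ∑ i ∈ Finset.range n, Int.sign (α (i + 1)) := by
  classical
  set a : ℕ → ℝ := fun j => (α j : ℝ) with ha
  have habs : ∀ j, 1 ≤ j → j ≤ n → 2 ≤ |a j| := by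
    intro j h1 h2
    have h3 := hα j h1 h2
    rw [ha]
    rw [show |((α j : ℝ))| = ((|α j| : ℤ) : ℝ) by push_cast; rfl]
    exact_mod_cast h3
  have hnz : ∀ k : Fin n, cdelta a (k.1 + 1) ≠ 0 := fun k =>
    cdelta_ne_zero a (k.1 + 1) (by omega) (fun j hj1 hj2 => habs j hj1 (by omega))
  set A := chainMatrix a n with hAdef
  set L := Lmat a n with hLdef
  set δ : Fin n → ℝ := fun i => cdelta a (i.1 + 1) with hδ
  have hfac : A = L * Matrix.diagonal δ * Lᵀ := chain_factor a n hnz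
  have hLdet : L.det = 1 := by
    refine Lmat_det_aux L (fun i => by simp [hLdef, Lmat]) (fun i j hij => ?_)
    have hv : i.1 < j.1 := hij
    show (Matrix.of _ : Matrix (Fin n) (Fin n) ℝ) i j = 0
    simp only [Matrix.of_apply]
    rw [if_neg (Fin.ne_of_lt hij), if_neg (by omega)]
  have hdetA : A.det = ∏ i, δ i := by
    rw [hfac, Matrix.det_mul, Matrix.det_mul, Matrix.det_transpose, hLdet,
      Matrix.det_diagonal]
    ring
  have hdetA0 : A.det ≠ 0 := by
    rw [hdetA]; exact Finset.prod_ne_zero_iff.mpr fun i _ => hnz i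
  refine ⟨hdetA0, ?_⟩
  set E : Fin n → ℝ := hA.eigenvalues with hE
  have hdetE : A.det = ∏ i, E i := by
    have := hA.det_eq_prod_eigenvalues
    simpa [RCLike.ofReal_real_eq_id] using this
  have hE0 : ∀ i, E i ≠ 0 := by
    intro i hi
    exact hdetA0 (hdetE.trans (Finset.prod_eq_zero (Finset.mem_univ i) hi))
  set U : Matrix (Fin n) (Fin n) ℝ := (Matrix.IsHermitian.eigenvectorUnitary hA : Matrix (Fin n) (Fin n) ℝ) with hU
  have hspec : star U * A * U = Matrix.diagonal E := by
    have := Matrix.IsHermitian.conjStarAlgAut_star_eigenvectorUnitary hA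
    simpa [RCLike.ofReal_real_eq_id, Unitary.conjStarAlgAut_star_apply] using this
  have hstar : star U = Uᵀ := by
    ext i j
    simp [Matrix.star_apply]
  have hdetU : U.det ≠ 0 := by
    have h1 : U * star U = 1 :=
      Matrix.mem_unitaryGroup_iff.mp (Matrix.IsHermitian.eigenvectorUnitary hA).2
    have h2 := congrArg Matrix.det h1
    rw [Matrix.det_mul, Matrix.det_one] at h2
    exact left_ne_zero_of_mul_eq_one h2
  set M : Matrix (Fin n) (Fin n) ℝ := Lᵀ * U with hM
  have hdetM : M.det ≠ 0 := by
    rw [hM, Matrix.det_mul, Matrix.det_transpose, hLdet]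
    simpa using hdetU
  have id1 : ∀ x : Fin n → ℝ, ∑ i, E i * x i ^ 2 = ∑ i, δ i * ((M *ᵥ x) i) ^ 2 := by
    intro x
    rw [← dot_diagonal_eq_sum E x, ← hspec, hstar, dot_congr U A x, hfac,
      dot_congr' L (Matrix.diagonal δ) (U *ᵥ x), Matrix.mulVec_mulVec,
      dot_diagonal_eq_sum]
  have id2 : ∀ x : Fin n → ℝ, ∑ i, δ i * x i ^ 2 = ∑ i, E i * ((M⁻¹ *ᵥ x) i) ^ 2 := by
    intro x
    have h1 := id1 (M⁻¹ *ᵥ x)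
    have hMM : M * M⁻¹ = 1 := Matrix.mul_nonsing_inv M (isUnit_iff_ne_zero.mpr hdetM)
    rw [Matrix.mulVec_mulVec, hMM, Matrix.one_mulVec] at h1
    exact h1.symm
  have c1 := posCard_le δ E (fun i => hnz i) M id1
  have c2 := posCard_le E δ hE0 M⁻¹ id2
  have cpos : (univ.filter fun i => 0 < E i).card = (univ.filter fun i => 0 < δ i).card :=
    le_antisymm c1 c2
  have hδsign : ∀ i : Fin n, (0 < δ i ↔ 0 < α (i.1 + 1)) := by
    intro i
    have h1 := (cdelta_prop a (i.1 + 1) (by omega)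
      (fun j hj1 hj2 => habs j hj1 (by omega))).2
    rw [hδ]
    dsimp only
    rw [h1, ha]
    exact Int.cast_pos
  have partE : (univ.filter fun i : Fin n => 0 < E i).card
      + (univ.filter fun i : Fin n => ¬ 0 < E i).card = n := by
    rw [Finset.card_filter_add_card_filter_not]
    simp
  have partδ : (univ.filter fun i : Fin n => 0 < δ i).card
      + (univ.filter fun i : Fin n => ¬ 0 < δ i).card = n := by
    rw [Finset.card_filter_add_card_filter_not]
    simp
  have negE : (univ.filter fun i : Fin n => E i < 0)
      = (univ.filter fun i : Fin n => ¬ 0 < E i) := by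
    refine Finset.filter_congr fun i _ => ?_
    exact ⟨fun h => not_lt.mpr h.le, fun h => lt_of_le_of_ne (not_lt.mp h) (hE0 i)⟩
  have hsign : ∀ i : Fin n, Int.sign (α (i.1 + 1)) = if 0 < δ i then (1:ℤ) else -1 := by
    intro i
    have h2 := hα (i.1 + 1) (by omega) (by omega)
    by_cases hp : 0 < δ i
    · rw [if_pos hp]
      exact Int.sign_eq_one_iff_pos.mpr ((hδsign i).mp hp)
    · rw [if_neg hp]
      have h3 : ¬ 0 < α (i.1 + 1) := fun hc => hp ((hδsign i).mpr hc)
      have h4 : α (i.1 + 1) < 0 := by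
        rcases abs_cases (α (i.1 + 1)) with ⟨he, _⟩ | ⟨he, _⟩ <;> omega
      exact Int.sign_eq_neg_one_iff_neg.mpr h4
  have rhs : ∑ i ∈ Finset.range n, Int.sign (α (i + 1))
      = ((univ.filter fun i : Fin n => 0 < δ i).card : ℤ)
        - ((univ.filter fun i : Fin n => ¬ 0 < δ i).card : ℤ) := by
    rw [← Fin.sum_univ_eq_sum_range (fun i => Int.sign (α (i + 1))) n]
    rw [Finset.sum_congr rfl (fun i _ => hsign i), Finset.sum_ite]
    simp only [Finset.sum_const, nsmul_eq_mul, mul_one, mul_neg_one, not_lt]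
    have : filter (fun x : Fin n => δ x ≤ 0) univ = filter (fun i : Fin n => ¬ 0 < δ i) univ :=
      Finset.filter_congr fun i _ => by simp
    rw [this]
    ring
  rw [rhs]
  show ((univ.filter fun i : Fin n => 0 < E i).card : ℤ)
      - ((univ.filter fun i : Fin n => E i < 0).card : ℤ) = _
  rw [negE]
  omega
end

section
/- Let n ≥ 2 and let β_2, …, β_n be integers with |β_i| ≥ 2 for all i. Then the chain matrix A(0, −β_2, …, −β_n) with first diagonal entry 0 (viewed over ℝ) is nonsingular and its signature equals sgn(β_2) − Σ_{i=2}^n sgn(β_i). -/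
open Finset Module

variable {n : ℕ}

noncomputable def piv (d : ℕ → ℝ) : ℕ → ℝ
  | 0 => 1
  | 1 => 1
  | 2 => 1
  | 3 => d 3
  | (k+4) => d (k+4) - 1 / piv d (k+3)

noncomputable def wgt (d : ℕ → ℝ) (k : ℕ) : ℝ :=
  if k = 0 then 1/2 else if k = 1 then -1/2 else piv d (k+1)

noncomputable def Lf (d : ℕ → ℝ) (X : ℕ → ℝ) (k : ℕ) : ℝ :=
  if k = 0 then X 0 + X 2 + (d 2/2+1) * X 1
  else if k = 1 then X 0 + X 2 + (d 2/2-1) * X 1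
  else X k + X (k+1) / piv d (k+1)

noncomputable def Qn (d : ℕ → ℝ) (n : ℕ) (X : ℕ → ℝ) : ℝ :=
  ∑ i ∈ Finset.range n, d (i+1) * X i^2 + 2 * ∑ i ∈ Finset.range (n-1), X i * X (i+1)

noncomputable def bnd (d : ℕ → ℝ) (n : ℕ) : ℝ := if n ≤ 2 then 0 else 1 / piv d n

lemma piv_succ (d : ℕ → ℝ) (k : ℕ) (hk : 3 ≤ k) :
    piv d (k+1) = d (k+1) - 1 / piv d k := by
  obtain ⟨m, rfl⟩ : ∃ m, k = m + 3 := ⟨k - 3, by omega⟩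
  rfl

lemma piv_close (d : ℕ → ℝ) (N : ℕ) (hd : ∀ k, 3 ≤ k → k ≤ N → 2 ≤ |d k|) :
    ∀ k, 3 ≤ k → k ≤ N → |piv d k - d k| ≤ 1 := by
  intro k hk3 hkN
  induction k, hk3 using Nat.le_induction with
  | base => simp [piv]
  | succ k hk ih =>
    have hdk : 2 ≤ |d k| := hd k hk (by omega)
    have h1 : 1 ≤ |piv d k| := by
      have h2 := ih (by omega)
      have h3 := abs_sub_abs_le_abs_sub (d k) (piv d k)
      have h4 := abs_sub_comm (piv d k) (d k)
      nlinarith [abs_nonneg (piv d k - d k)]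
    rw [piv_succ d k hk]
    rw [show d (k+1) - 1 / piv d k - d (k+1) = -(1 / piv d k) by ring]
    rw [abs_neg, abs_div, abs_one]
    have h0 : (0:ℝ) < |piv d k| := by linarith
    rw [div_le_one h0]; exact h1

lemma piv_one_le (d : ℕ → ℝ) (N : ℕ) (hd : ∀ k, 3 ≤ k → k ≤ N → 2 ≤ |d k|) :
    ∀ k, 3 ≤ k → k ≤ N → 1 ≤ |piv d k| := by
  intro k hk3 hkN
  have h := piv_close d N hd k hk3 hkN
  have hdk := hd k hk3 hkN
  have h3 := abs_sub_abs_le_abs_sub (d k) (piv d k)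
  have h4 := abs_sub_comm (piv d k) (d k)
  nlinarith [abs_nonneg (piv d k - d k)]

lemma piv_ne (d : ℕ → ℝ) (N : ℕ) (hd : ∀ k, 3 ≤ k → k ≤ N → 2 ≤ |d k|) :
    ∀ k, 3 ≤ k → k ≤ N → piv d k ≠ 0 := by
  intro k h3 hN h0
  have := piv_one_le d N hd k h3 hN
  rw [h0] at this; simp at this; linarith

lemma piv_sign (d : ℕ → ℝ) (N : ℕ) (hd : ∀ k, 3 ≤ k → k ≤ N → 2 ≤ |d k|) :
    ∀ k, 3 ≤ k → k ≤ N → (0 < piv d k ↔ 0 < d k) := by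
  intro k h3 hN
  have h := piv_close d N hd k h3 hN
  have hdk := hd k h3 hN
  rcases abs_cases (d k) with ⟨he, hp⟩ | ⟨he, hp⟩ <;>
    rcases abs_cases (piv d k - d k) with ⟨h1, _⟩ | ⟨h1, _⟩ <;>
    constructor <;> intro <;> nlinarith


lemma QAnat (d : ℕ → ℝ) (X : ℕ → ℝ) : ∀ n : ℕ,
    ∑ i ∈ Finset.range n, ∑ j ∈ Finset.range n,
      (X i * (if i = j then d (i+1) else if i+1 = j ∨ j+1 = i then 1 else 0) * X j)
    = Qn d n X := by
  intro n
  induction n with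
  | zero => simp [Qn]
  | succ n ih =>
    rw [Finset.sum_range_succ]
    have hrow : ∀ i ∈ Finset.range n,
        ∑ j ∈ Finset.range (n+1),
          (X i * (if i = j then d (i+1) else if i+1 = j ∨ j+1 = i then 1 else 0) * X j)
        = (∑ j ∈ Finset.range n,
          (X i * (if i = j then d (i+1) else if i+1 = j ∨ j+1 = i then 1 else 0) * X j))
          + (if i+1 = n then X i * X n else 0) := by
      intro i hi
      rw [Finset.mem_range] at hi
      rw [Finset.sum_range_succ]
      congr 1
      rw [if_neg (by omega : ¬ i = n)]
      by_cases hc : i + 1 = n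
      · rw [if_pos (Or.inl hc), if_pos hc]; ring
      · rw [if_neg (by omega : ¬ (i+1 = n ∨ n+1 = i)), if_neg hc]; ring
    rw [Finset.sum_congr rfl hrow, Finset.sum_add_distrib, ih]
    have hlast : ∑ j ∈ Finset.range (n+1),
        (X n * (if n = j then d (n+1) else if n+1 = j ∨ j+1 = n then 1 else 0) * X j)
        = d (n+1) * X n ^2 + (if 1 ≤ n then X (n-1) * X n else 0) := by
      rw [Finset.sum_range_succ]
      have hdiag : (X n * (if n = n then d (n+1) else if n+1 = n ∨ n+1 = n then 1 else 0)) * X n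
          = d (n+1) * X n ^ 2 := by rw [if_pos rfl]; ring
      have hrest : ∀ j ∈ Finset.range n,
          (X n * (if n = j then d (n+1) else if n+1 = j ∨ j+1 = n then 1 else 0) * X j)
          = if j = n-1 ∧ 1 ≤ n then X (n-1) * X n else 0 := by
        intro j hj
        rw [Finset.mem_range] at hj
        rw [if_neg (by omega : ¬ n = j)]
        by_cases hc : j + 1 = n
        · rw [if_pos (Or.inr hc), if_pos (by omega : j = n-1 ∧ 1 ≤ n)]
          have : j = n - 1 := by omega
          rw [this]; ring
        · rw [if_neg (by omega : ¬ (n+1 = j ∨ j+1 = n)),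
            if_neg (by omega : ¬ (j = n-1 ∧ 1 ≤ n))]; ring
      rw [Finset.sum_congr rfl hrest, hdiag]
      rcases Nat.eq_zero_or_pos n with h0 | h1
      · subst h0; simp
      · have hsimp : ∀ x ∈ Finset.range n, (if x = n - 1 ∧ 1 ≤ n then X (n-1) * X n else 0)
            = if x = n-1 then X (n-1) * X n else 0 := by
          intro x hx
          by_cases hc : x = n-1
          · rw [if_pos ⟨hc, h1⟩, if_pos hc]
          · rw [if_neg (by omega : ¬ (x = n-1 ∧ 1 ≤ n)), if_neg hc]
        rw [Finset.sum_congr rfl hsimp,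
          Finset.sum_ite_eq' (Finset.range n) (n-1) (fun _ => X (n-1) * X n)]
        rw [if_pos (Finset.mem_range.mpr (by omega)), if_pos (by omega : 1 ≤ n)]
        ring
    rw [hlast]
    have hcross : ∑ i ∈ Finset.range n, (if i+1 = n then X i * X n else 0)
        = if 1 ≤ n then X (n-1) * X n else 0 := by
      rcases Nat.eq_zero_or_pos n with h0 | h1
      · subst h0; simp
      · have hsimp : ∀ i ∈ Finset.range n, (if i+1 = n then X i * X n else 0)
            = if i = n-1 then X (n-1) * X n else 0 := by
          intro i hi
          rw [Finset.mem_range] at hi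
          by_cases hc : i + 1 = n
          · rw [if_pos hc, if_pos (by omega : i = n-1), (by omega : i = n-1)]
          · rw [if_neg hc, if_neg (by omega : ¬ i = n-1)]
        rw [Finset.sum_congr rfl hsimp,
          Finset.sum_ite_eq' (Finset.range n) (n-1) (fun _ => X (n-1) * X n)]
        rw [if_pos (Finset.mem_range.mpr (by omega)), if_pos (by omega : 1 ≤ n)]
    rw [hcross]
    simp only [Qn]
    rcases Nat.eq_zero_or_pos n with h0 | h1
    · subst h0; simp
    · rw [Finset.sum_range_succ (fun i => d (i+1) * X i^2) n]
      have h2 : n + 1 - 1 = (n-1) + 1 := by omega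
      rw [h2, Finset.sum_range_succ (fun i => X i * X (i+1)) (n-1)]
      have h3 : n - 1 + 1 = n := by omega
      rw [h3, if_pos (show 1 ≤ n from h1)]
      ring
lemma Gident (d : ℕ → ℝ) (hd1 : d 1 = 0) (X : ℕ → ℝ) : ∀ n, 2 ≤ n →
    (∀ k, 3 ≤ k → k ≤ n → piv d k ≠ 0) →
    Qn d n X + 2 * X (n-1) * X n + bnd d n * X n ^ 2
      = ∑ k ∈ Finset.range n, wgt d k * (Lf d X k)^2 := by
  intro n hn
  induction n, hn using Nat.le_induction with
  | base =>
    intro _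
    simp only [Qn, bnd, Finset.sum_range_succ, Finset.sum_range_one, Finset.sum_range_zero,
      wgt, Lf, if_pos rfl]
    norm_num [hd1]
    ring
  | succ n hn ih =>
    intro hp
    have hpn1 : piv d (n+1) ≠ 0 := hp (n+1) (by omega) (by omega)
    have ihh := ih (fun k h3 hk => hp k h3 (by omega))
    rw [Finset.sum_range_succ, ← ihh]
    have hw : wgt d n = piv d (n+1) := by
      simp only [wgt, if_neg (by omega : ¬ n = 0), if_neg (by omega : ¬ n = 1)]
    have hL : Lf d X n = X n + X (n+1) / piv d (n+1) := by
      simp only [Lf, if_neg (by omega : ¬ n = 0), if_neg (by omega : ¬ n = 1)]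
    have hQ : Qn d (n+1) X = Qn d n X + d (n+1) * X n ^2 + 2 * X (n-1) * X n := by
      simp only [Qn]
      rw [Finset.sum_range_succ (fun i => d (i+1) * X i^2) n]
      have h2 : n + 1 - 1 = (n-1) + 1 := by omega
      rw [h2, Finset.sum_range_succ (fun i => X i * X (i+1)) (n-1)]
      have h3 : n - 1 + 1 = n := by omega
      rw [h3]; ring
    have hrec : d (n+1) = bnd d n + piv d (n+1) := by
      rcases Nat.lt_or_ge n 3 with h | h
      · have hn2 : n = 2 := by omega
        subst hn2
        simp [bnd, piv]
      · have := piv_succ d n (by omega)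
        simp only [bnd, if_neg (by omega : ¬ n ≤ 2)]
        rw [this]; ring
    rw [hQ, hw, hL]
    have hb1 : bnd d (n+1) = 1 / piv d (n+1) := by
      simp only [bnd, if_neg (by omega : ¬ n + 1 ≤ 2)]
    rw [hb1]
    have h4 : n + 1 - 1 = n := by omega
    rw [h4, hrec]
    field_simp
    ring
lemma Lker (d : ℕ → ℝ) (n : ℕ) (hn : 2 ≤ n) (hp : ∀ k, 3 ≤ k → k ≤ n → piv d k ≠ 0)
    (X : ℕ → ℝ) (hX0 : ∀ j, n ≤ j → X j = 0) (hL : ∀ k, k < n → Lf d X k = 0) :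
    ∀ j, X j = 0 := by
  have high : ∀ t, ∀ j, 2 ≤ j → n ≤ j + t → X j = 0 := by
    intro t
    induction t with
    | zero => intro j _ h; exact hX0 j (by omega)
    | succ t ih =>
      intro j hj2 hjt
      rcases le_or_gt n (j + t) with h | h
      · exact ih j hj2 h
      · have hjn : j < n := by omega
        have hLj := hL j hjn
        rw [Lf, if_neg (by omega : ¬ j = 0), if_neg (by omega : ¬ j = 1)] at hLj
        have hX1 : X (j+1) = 0 := ih (j+1) (by omega) (by omega)
        rw [hX1] at hLj
        simpa using hLj
  have h2 : ∀ j, 2 ≤ j → X j = 0 := fun j hj => high n j hj (by omega)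
  have hL0 := hL 0 (by omega)
  have hL1 := hL 1 (by omega)
  rw [Lf, if_pos rfl] at hL0
  rw [Lf, if_neg (by omega : ¬ (1:ℕ) = 0), if_pos rfl] at hL1
  have hX2 : X 2 = 0 := h2 2 le_rfl
  have hX1 : X 1 = 0 := by rw [hX2] at hL0 hL1; linarith
  have hX0' : X 0 = 0 := by rw [hX2, hX1] at hL0; linarith
  intro j
  match j, Nat.lt_or_ge j 2 with
  | 0, _ => exact hX0'
  | 1, _ => exact hX1
  | (m+2), _ => exact h2 (m+2) (by omega)



/-- functions vanishing off `s`, as a submodule of `Fin n → ℝ`. -/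
def zeroOff (s : Finset (Fin n)) : Submodule ℝ (Fin n → ℝ) where
  carrier := {x | ∀ i ∉ s, x i = 0}
  add_mem' := by intro a b ha hb i hi; simp [ha i hi, hb i hi]
  zero_mem' := by intro i _; rfl
  smul_mem' := by intro c a ha i hi; simp [ha i hi]

/-- `zeroOff s` is isomorphic to `s → ℝ`. -/
noncomputable def zeroOffEquiv (s : Finset (Fin n)) : zeroOff s ≃ₗ[ℝ] ({i // i ∈ s} → ℝ) where
  toFun x i := x.1 i.1
  map_add' x y := rfl
  map_smul' c x := rfl
  invFun z := ⟨fun i => if h : i ∈ s then z ⟨i, h⟩ else 0, by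
    intro i hi; simp [hi]⟩
  left_inv := by
    intro x
    ext i
    by_cases h : i ∈ s
    · simp [h]
    · simp [h, (x.2 i h).symm]
  right_inv := by intro z; ext i; simp [i.2]

lemma finrank_zeroOff (s : Finset (Fin n)) : finrank ℝ (zeroOff s) = s.card := by
  rw [LinearEquiv.finrank_eq (zeroOffEquiv s), Module.finrank_fintype_fun_eq_card,
    Fintype.card_coe]

lemma zeroOff_sup (s : Finset (Fin n)) : zeroOff s ⊔ zeroOff sᶜ = ⊤ := by
  rw [eq_top_iff]
  intro x _
  have : x = (fun i => if i ∈ s then x i else 0) + (fun i => if i ∈ s then 0 else x i) := by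
    funext i; by_cases h : i ∈ s <;> simp [h]
  rw [this]
  exact Submodule.add_mem_sup
    (by intro i hi; simp [if_neg hi])
    (by intro i hi; simp at hi; simp [hi])

/-- main inequality: posdef subspace + negsemidef subspace have total dim ≤ n. -/
lemma core_le (Q : (Fin n → ℝ) → ℝ) (P N : Submodule ℝ (Fin n → ℝ))
    (hP : ∀ x ∈ P, x ≠ 0 → 0 < Q x) (hN : ∀ x ∈ N, Q x ≤ 0) :
    finrank ℝ P + finrank ℝ N ≤ n := by
  have hdisj : P ⊓ N = ⊥ := by
    rw [Submodule.eq_bot_iff]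
    intro x ⟨hxP, hxN⟩
    by_contra hx
    exact absurd (hN x hxN) (not_le.mpr (hP x hxP hx))
  have := Submodule.finrank_sup_add_finrank_inf_eq P N
  rw [hdisj] at this
  have hle : finrank ℝ ↥(P ⊔ N) ≤ finrank ℝ (Fin n → ℝ) := Submodule.finrank_le _
  rw [Module.finrank_fintype_fun_eq_card, Fintype.card_fin] at hle
  simp at this
  omega







/-- subspace where `e x` vanishes off `s`. -/
noncomputable def eKer (e : (Fin n → ℝ) ≃ₗ[ℝ] (Fin n → ℝ)) (s : Finset (Fin n)) :
    Submodule ℝ (Fin n → ℝ) := (zeroOff s).map (e.symm : (Fin n → ℝ) →ₗ[ℝ] (Fin n → ℝ))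

lemma mem_eKer {e : (Fin n → ℝ) ≃ₗ[ℝ] (Fin n → ℝ)} {s : Finset (Fin n)} {x : Fin n → ℝ} :
    x ∈ eKer e s ↔ ∀ i ∉ s, e x i = 0 := by
  rw [eKer, Submodule.mem_map_equiv, LinearEquiv.symm_symm]
  rfl

lemma finrank_eKer (e : (Fin n → ℝ) ≃ₗ[ℝ] (Fin n → ℝ)) (s : Finset (Fin n)) :
    finrank ℝ (eKer e s) = s.card := by
  rw [eKer, LinearEquiv.finrank_map_eq, finrank_zeroOff]

lemma eKer_posdef (Q : (Fin n → ℝ) → ℝ) (e : (Fin n → ℝ) ≃ₗ[ℝ] (Fin n → ℝ))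
    (w : Fin n → ℝ) (h : ∀ x, Q x = ∑ i, w i * (e x i)^2) :
    ∀ x ∈ eKer e (univ.filter fun i => 0 < w i), x ≠ 0 → 0 < Q x := by
  intro x hx hx0
  rw [mem_eKer] at hx
  simp only [mem_filter, mem_univ, true_and] at hx
  rw [h]
  have hex : e x ≠ 0 := fun hc => hx0 (by
    have := congrArg e.symm hc
    simpa using this)
  obtain ⟨i0, hi0⟩ : ∃ i, e x i ≠ 0 := Function.ne_iff.mp hex
  have hi0w : 0 < w i0 := by
    by_contra hc
    exact hi0 (hx i0 hc)
  apply Finset.sum_pos'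
  · intro i _
    by_cases hw : 0 < w i
    · positivity
    · rw [hx i hw]; simp
  · exact ⟨i0, Finset.mem_univ _, by positivity⟩

lemma eKer_negsemi (Q : (Fin n → ℝ) → ℝ) (e : (Fin n → ℝ) ≃ₗ[ℝ] (Fin n → ℝ))
    (w : Fin n → ℝ) (h : ∀ x, Q x = ∑ i, w i * (e x i)^2) :
    ∀ x ∈ eKer e (univ.filter fun i => 0 < w i)ᶜ, Q x ≤ 0 := by
  intro x hx
  rw [mem_eKer] at hx
  simp only [Finset.mem_compl, mem_filter, mem_univ, true_and, not_lt, not_not] at hx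
  rw [h]
  apply Finset.sum_nonpos
  intro i _
  by_cases hw : 0 < w i
  · rw [hx i (by simpa using hw)]; simp
  · push_neg at hw
    have := sq_nonneg (e x i)
    nlinarith

lemma count_pos_eq (Q : (Fin n → ℝ) → ℝ)
    (e1 : (Fin n → ℝ) ≃ₗ[ℝ] (Fin n → ℝ)) (w1 : Fin n → ℝ)
    (e2 : (Fin n → ℝ) ≃ₗ[ℝ] (Fin n → ℝ)) (w2 : Fin n → ℝ)
    (h1 : ∀ x, Q x = ∑ i, w1 i * (e1 x i)^2)
    (h2 : ∀ x, Q x = ∑ i, w2 i * (e2 x i)^2) :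
    (univ.filter fun i => 0 < w1 i).card = (univ.filter fun i => 0 < w2 i).card := by
  have key : ∀ (ea : (Fin n → ℝ) ≃ₗ[ℝ] (Fin n → ℝ)) (wa : Fin n → ℝ)
      (eb : (Fin n → ℝ) ≃ₗ[ℝ] (Fin n → ℝ)) (wb : Fin n → ℝ),
      (∀ x, Q x = ∑ i, wa i * (ea x i)^2) → (∀ x, Q x = ∑ i, wb i * (eb x i)^2) →
      (univ.filter fun i => 0 < wa i).card ≤ (univ.filter fun i => 0 < wb i).card := by
    intro ea wa eb wb ha hb
    have := core_le Q (eKer ea (univ.filter fun i => 0 < wa i))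
      (eKer eb (univ.filter fun i => 0 < wb i)ᶜ)
      (eKer_posdef Q ea wa ha) (eKer_negsemi Q eb wb hb)
    rw [finrank_eKer, finrank_eKer, Finset.card_compl] at this
    have hle : (univ.filter fun i => 0 < wb i).card ≤ Fintype.card (Fin n) :=
      Finset.card_le_univ _
    rw [Fintype.card_fin] at this hle
    omega
  exact le_antisymm (key e1 w1 e2 w2 h1 h2) (key e2 w2 e1 w1 h2 h1)

lemma count_neg_eq (Q : (Fin n → ℝ) → ℝ)
    (e1 : (Fin n → ℝ) ≃ₗ[ℝ] (Fin n → ℝ)) (w1 : Fin n → ℝ)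
    (e2 : (Fin n → ℝ) ≃ₗ[ℝ] (Fin n → ℝ)) (w2 : Fin n → ℝ)
    (h1 : ∀ x, Q x = ∑ i, w1 i * (e1 x i)^2)
    (h2 : ∀ x, Q x = ∑ i, w2 i * (e2 x i)^2) :
    (univ.filter fun i => w1 i < 0).card = (univ.filter fun i => w2 i < 0).card := by
  have h1' : ∀ x, -Q x = ∑ i, (-w1 i) * (e1 x i)^2 := by
    intro x; rw [h1 x, ← Finset.sum_neg_distrib]; congr 1; funext i; ring
  have h2' : ∀ x, -Q x = ∑ i, (-w2 i) * (e2 x i)^2 := by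
    intro x; rw [h2 x, ← Finset.sum_neg_distrib]; congr 1; funext i; ring
  have := count_pos_eq (fun x => -Q x) e1 (fun i => -w1 i) e2 (fun i => -w2 i) h1' h2'
  simpa [neg_pos] using this




/-- the linear equivalence given by an invertible matrix pair -/
noncomputable def matEquiv (C U : Matrix (Fin n) (Fin n) ℝ) (hCU : C * U = 1) (hUC : U * C = 1) :
    (Fin n → ℝ) ≃ₗ[ℝ] (Fin n → ℝ) :=
  LinearEquiv.ofLinear (Matrix.toLin' C) (Matrix.toLin' U)
    (by rw [← Matrix.toLin'_mul, hCU, Matrix.toLin'_one])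
    (by rw [← Matrix.toLin'_mul, hUC, Matrix.toLin'_one])

lemma matEquiv_apply (C U : Matrix (Fin n) (Fin n) ℝ) (hCU : C * U = 1) (hUC : U * C = 1)
    (x : Fin n → ℝ) : matEquiv C U hCU hUC x = C.mulVec x := rfl

/-- eigen-side representation of the quadratic form -/
lemma eigen_repr (A : Matrix (Fin n) (Fin n) ℝ) (hA : A.IsHermitian) :
    ∃ e : (Fin n → ℝ) ≃ₗ[ℝ] (Fin n → ℝ),
      ∀ x, dotProduct x (A.mulVec x) = ∑ i, hA.eigenvalues i * (e x i)^2 := by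
  set U : Matrix (Fin n) (Fin n) ℝ := (Matrix.IsHermitian.eigenvectorUnitary hA : Matrix (Fin n) (Fin n) ℝ) with hU
  have hCU : star U * U = 1 := Unitary.coe_star_mul_self _
  have hUC : U * star U = 1 := Unitary.coe_mul_star_self _
  refine ⟨matEquiv (star U) U hCU hUC, fun x => ?_⟩
  rw [matEquiv_apply]
  conv_lhs => rw [hA.spectral_theorem, Unitary.conjStarAlgAut_apply]
  rw [← Matrix.mulVec_mulVec, ← Matrix.mulVec_mulVec, Matrix.dotProduct_mulVec]
  have hvm : Matrix.vecMul x U = Matrix.mulVec (star U) x := by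
    rw [Matrix.star_eq_conjTranspose, Matrix.conjTranspose_eq_transpose_of_trivial,
      Matrix.mulVec_transpose]
  rw [hvm]
  simp only [Matrix.mulVec_diagonal, dotProduct]
  congr 1
  funext i
  simp only [Function.comp_apply, RCLike.ofReal_real_eq_id, id_eq]
  ring







lemma pos_neg_card (w : Fin n → ℝ) (hw : ∀ i, w i ≠ 0) :
    (univ.filter fun i => 0 < w i).card + (univ.filter fun i => w i < 0).card = n := by
  have hun : (univ.filter fun i => 0 < w i) ∪ (univ.filter fun i => w i < 0) = univ := by
    ext i
    simp only [Finset.mem_union, mem_filter, mem_univ, true_and, iff_true]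
    exact ((hw i).lt_or_gt).symm
  have hdis : Disjoint (univ.filter fun i => 0 < w i) (univ.filter fun i => w i < 0) := by
    rw [Finset.disjoint_filter]
    intro i _ h1
    linarith
  have := Finset.card_union_of_disjoint hdis
  rw [hun, Finset.card_univ, Fintype.card_fin] at this
  omega

lemma master (A : Matrix (Fin n) (Fin n) ℝ) (hA : A.IsHermitian)
    (e : (Fin n → ℝ) ≃ₗ[ℝ] (Fin n → ℝ)) (w : Fin n → ℝ) (hw : ∀ i, w i ≠ 0)
    (h : ∀ x, dotProduct x (A.mulVec x) = ∑ i, w i * (e x i)^2) :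
    A.det ≠ 0 ∧ matSignature A hA =
      ((univ.filter fun i => 0 < w i).card : ℤ) - ((univ.filter fun i => w i < 0).card : ℤ) := by
  obtain ⟨e1, h1⟩ := eigen_repr A hA
  have hpos := count_pos_eq (fun x => dotProduct x (A.mulVec x)) e1 hA.eigenvalues e w h1 h
  have hneg := count_neg_eq (fun x => dotProduct x (A.mulVec x)) e1 hA.eigenvalues e w h1 h
  constructor
  · have hcard : (univ.filter fun i => 0 < hA.eigenvalues i).card
        + (univ.filter fun i => hA.eigenvalues i < 0).card = n := by
      rw [hpos, hneg]; exact pos_neg_card w hw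
    have hune : (univ.filter fun i => 0 < hA.eigenvalues i)
        ∪ (univ.filter fun i => hA.eigenvalues i < 0) = univ := by
      apply Finset.eq_univ_of_card
      rw [Finset.card_union_of_disjoint, hcard, Fintype.card_fin]
      rw [Finset.disjoint_filter]
      intro i _ h1
      linarith
    have hev : ∀ i, hA.eigenvalues i ≠ 0 := by
      intro i
      have : i ∈ (univ.filter fun i => 0 < hA.eigenvalues i)
          ∪ (univ.filter fun i => hA.eigenvalues i < 0) := by rw [hune]; exact mem_univ i
      simp only [Finset.mem_union, mem_filter, mem_univ, true_and] at this
      rcases this with h | h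
      · exact ne_of_gt h
      · exact ne_of_lt h
    rw [hA.det_eq_prod_eigenvalues]
    push_cast
    exact Finset.prod_ne_zero_iff.mpr (fun i _ => hev i)
  · rw [matSignature, hpos, hneg]

/-! ### Bridge to the chain matrix -/

def extv {n : ℕ} (x : Fin n → ℝ) : ℕ → ℝ := fun j => if h : j < n then x ⟨j, h⟩ else 0

lemma extv_add {n : ℕ} (x y : Fin n → ℝ) : extv (x + y) = extv x + extv y := by
  funext j; by_cases h : j < n <;> simp [extv, h]

lemma extv_smul {n : ℕ} (c : ℝ) (x : Fin n → ℝ) : extv (c • x) = c • extv x := by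
  funext j; by_cases h : j < n <;> simp [extv, h]

noncomputable def Mlin (d : ℕ → ℝ) (n : ℕ) : (Fin n → ℝ) →ₗ[ℝ] (Fin n → ℝ) where
  toFun x := fun k => Lf d (extv x) k.1
  map_add' x y := by
    funext k
    show Lf d (extv (x + y)) k.1 = Lf d (extv x) k.1 + Lf d (extv y) k.1
    rw [extv_add]
    simp only [Lf, Pi.add_apply]
    split_ifs <;> ring
  map_smul' c x := by
    funext k
    show Lf d (extv (c • x)) k.1 = (RingHom.id ℝ) c • (fun k : Fin n => Lf d (extv x) k.1) k
    rw [extv_smul]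
    simp only [Lf, Pi.smul_apply, RingHom.id_apply, smul_eq_mul]
    split_ifs <;> ring

lemma Mlin_inj (d : ℕ → ℝ) (n : ℕ) (hn : 2 ≤ n)
    (hp : ∀ k, 3 ≤ k → k ≤ n → piv d k ≠ 0) : Function.Injective (Mlin d n) := by
  have key : ∀ x, Mlin d n x = 0 → x = 0 := by
    intro x hx
    have hX0 : ∀ j, n ≤ j → extv x j = 0 := by
      intro j hj
      simp only [extv]
      rw [dif_neg (by omega : ¬ j < n)]
    have hL : ∀ k, k < n → Lf d (extv x) k = 0 := by
      intro k hk
      have := congrFun hx ⟨k, hk⟩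
      simpa [Mlin] using this
    have := Lker d n hn hp (extv x) hX0 hL
    funext i
    have h2 := this i.1
    simpa [extv, i.isLt] using h2
  intro a b hab
  have := key (a - b) (by rw [map_sub, hab, sub_self])
  exact sub_eq_zero.mp this

lemma chain_repr (d : ℕ → ℝ) (n : ℕ) (hd1 : d 1 = 0) (hn : 2 ≤ n)
    (hp : ∀ k, 3 ≤ k → k ≤ n → piv d k ≠ 0) (x : Fin n → ℝ) :
    dotProduct x ((chainMatrix d n).mulVec x)
      = ∑ k : Fin n, wgt d k.1 * (Lf d (extv x) k.1)^2 := by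
  set F : ℕ → ℕ → ℝ := fun a b =>
    extv x a * (if a = b then d (a+1) else if a+1 = b ∨ b+1 = a then 1 else 0) * extv x b
    with hF
  have h1 : dotProduct x ((chainMatrix d n).mulVec x)
      = ∑ i : Fin n, ∑ j : Fin n, F i.1 j.1 := by
    rw [dotProduct]
    apply Finset.sum_congr rfl
    intro i _
    rw [Matrix.mulVec, dotProduct, Finset.mul_sum]
    apply Finset.sum_congr rfl
    intro j _
    have hxi : extv x i.1 = x i := by simp [extv, i.isLt]
    have hxj : extv x j.1 = x j := by simp [extv, j.isLt]
    have hA : chainMatrix d n i j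
        = (if i.1 = j.1 then d (i.1+1) else if i.1+1 = j.1 ∨ j.1+1 = i.1 then 1 else 0) := by
      simp only [chainMatrix, Matrix.of_apply]
      exact if_congr Fin.ext_iff rfl rfl
    rw [hF]
    simp only
    rw [hxi, hxj, hA]
    ring
  rw [h1]
  have h2 : ∀ i : Fin n, ∑ j : Fin n, F i.1 j.1 = ∑ j ∈ Finset.range n, F i.1 j :=
    fun i => Fin.sum_univ_eq_sum_range (fun j => F i.1 j) n
  rw [Finset.sum_congr rfl (fun i _ => h2 i),
    Fin.sum_univ_eq_sum_range (fun a => ∑ j ∈ Finset.range n, F a j) n]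
  rw [QAnat d (extv x) n]
  have hXn : extv x n = 0 := dif_neg (lt_irrefl n)
  have h3 : Qn d n (extv x) = Qn d n (extv x) + 2 * extv x (n-1) * extv x n
      + bnd d n * extv x n ^ 2 := by rw [hXn]; ring
  rw [h3, Gident d hd1 (extv x) n hn hp]
  exact (Fin.sum_univ_eq_sum_range (fun k => wgt d k * (Lf d (extv x) k)^2) n).symm

theorem stmt10 (n : ℕ) (hn : 2 ≤ n) (β : ℕ → ℤ)
    (hβ : ∀ i, 2 ≤ i → i ≤ n → 2 ≤ |β i|)
    (hA : (chainMatrix (fun j => if j = 1 then (0 : ℝ) else -(β j : ℝ)) n).IsHermitian) :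
    (chainMatrix (fun j => if j = 1 then (0 : ℝ) else -(β j : ℝ)) n).det ≠ 0 ∧
    matSignature (chainMatrix (fun j => if j = 1 then (0 : ℝ) else -(β j : ℝ)) n) hA =
      Int.sign (β 2) - ∑ i ∈ Finset.Icc 2 n, Int.sign (β i) := by
  set d : ℕ → ℝ := fun j => if j = 1 then (0 : ℝ) else -(β j : ℝ) with hd
  have hd1 : d 1 = 0 := by simp [hd]
  have hdabs : ∀ k, 3 ≤ k → k ≤ n → 2 ≤ |d k| := by
    intro k h3 hk
    have hb := hβ k (by omega) hk
    simp only [hd, if_neg (by omega : ¬ k = 1), abs_neg]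
    rw [← Int.cast_abs]
    exact_mod_cast hb
  have hp : ∀ k, 3 ≤ k → k ≤ n → piv d k ≠ 0 := piv_ne d n hdabs
  have hinj := Mlin_inj d n hn hp
  let e : (Fin n → ℝ) ≃ₗ[ℝ] (Fin n → ℝ) :=
    LinearEquiv.ofBijective (Mlin d n) ⟨hinj, (LinearMap.injective_iff_surjective).mp hinj⟩
  set w : Fin n → ℝ := fun k => wgt d k.1 with hwdef
  have hw : ∀ k : Fin n, w k ≠ 0 := by
    intro k
    rw [hwdef]
    by_cases h0 : k.1 = 0
    · simp only [wgt, h0, if_pos rfl]; norm_num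
    by_cases h1 : k.1 = 1
    · simp only [wgt, h1]; norm_num
    · simp only [wgt, if_neg h0, if_neg h1]
      exact hp (k.1+1) (by omega) (by have := k.isLt; omega)
  have hrepr : ∀ x, dotProduct x ((chainMatrix d n).mulVec x)
      = ∑ k, w k * (e x k)^2 := by
    intro x
    exact chain_repr d n hd1 hn hp x
  obtain ⟨hdet, hsig⟩ := master (chainMatrix d n) hA e w hw hrepr
  refine ⟨hdet, ?_⟩
  rw [hsig]
  -- now pure counting
  have hsum : ((univ.filter fun k => 0 < w k).card : ℤ) - ((univ.filter fun k => w k < 0).card : ℤ)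
      = ∑ k : Fin n, (if 0 < w k then (1:ℤ) else -1) := by
    rw [Finset.card_filter, Finset.card_filter]
    push_cast
    rw [← Finset.sum_sub_distrib]
    apply Finset.sum_congr rfl
    intro k _
    by_cases h : 0 < w k
    · rw [if_pos h, if_pos h, if_neg (by linarith), ]
      norm_num
    · have hlt : w k < 0 := ((hw k).lt_or_gt).resolve_right h
      rw [if_neg h, if_neg h, if_pos hlt]
      norm_num
  rw [hsum]
  have hfin : ∑ k : Fin n, (if 0 < w k then (1:ℤ) else -1)
      = ∑ a ∈ Finset.range n, (if 0 < wgt d a then (1:ℤ) else -1) :=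
    Fin.sum_univ_eq_sum_range (fun a => if 0 < wgt d a then (1:ℤ) else -1) n
  rw [hfin, Finset.range_eq_Ico,
    ← Finset.sum_Ico_consecutive (fun a => if 0 < wgt d a then (1:ℤ) else -1)
      (by omega : 0 ≤ 2) hn]
  have hfirst : ∑ a ∈ Finset.Ico 0 2, (if 0 < wgt d a then (1:ℤ) else -1) = 0 := by
    rw [← Finset.range_eq_Ico]
    rw [Finset.sum_range_succ, Finset.sum_range_one]
    norm_num [wgt]
  rw [hfirst, zero_add]
  have hmain : ∀ a ∈ Finset.Ico 2 n, (if 0 < wgt d a then (1:ℤ) else -1)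
      = - Int.sign (β (a+1)) := by
    intro a ha
    rw [Finset.mem_Ico] at ha
    have hwa : wgt d a = piv d (a+1) := by
      simp only [wgt]
      rw [if_neg (by omega : ¬ a = 0), if_neg (by omega : ¬ a = 1)]
    have hsgn : 0 < piv d (a+1) ↔ 0 < d (a+1) := piv_sign d n hdabs (a+1) (by omega) (by omega)
    have hda : d (a+1) = -(β (a+1) : ℝ) := by
      rw [hd]
      simp only []
      rw [if_neg (by omega : ¬ a+1 = 1)]
    have hbne : β (a+1) ≠ 0 := by
      have := hβ (a+1) (by omega) (by omega)
      intro hc; rw [hc] at this; simp at this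
    rcases hbne.lt_or_gt with hneg | hpos
    · have : 0 < d (a+1) := by rw [hda]; push_cast; linarith [show (β (a+1):ℝ) < 0 by exact_mod_cast hneg]
      rw [hwa, if_pos (hsgn.mpr this), Int.sign_eq_neg_one_of_neg hneg]
      ring
    · have : ¬ 0 < d (a+1) := by
        rw [hda]; push_cast
        have : (0:ℝ) < (β (a+1):ℝ) := by exact_mod_cast hpos
        linarith
      rw [hwa, if_neg (fun hc => this (hsgn.mp hc)), Int.sign_eq_one_of_pos hpos]
  rw [Finset.sum_congr rfl hmain, Finset.sum_neg_distrib]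
  have hreindex : ∑ a ∈ Finset.Ico 2 n, Int.sign (β (a+1))
      = ∑ m ∈ Finset.Icc 3 n, Int.sign (β m) := by
    rw [← Finset.Ico_add_one_right_eq_Icc]
    rw [show Finset.Ico 3 (n+1) = (Finset.Ico 2 n).map (addRightEmbedding 1) by
      rw [Finset.map_add_right_Ico]]
    rw [Finset.sum_map]
    rfl
  rw [hreindex]
  have hins : Finset.Icc 2 n = insert 2 (Finset.Icc 3 n) := by
    ext a
    simp only [Finset.mem_Icc, Finset.mem_insert]
    omega
  rw [hins, Finset.sum_insert (by simp)]
  ring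
end
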